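/- Fix an observation symbol a ∈ Σ and states s₀, s ∈ S, and define Êᵃ_{s₀,s} = max over z̃ ∈ Ω¹_{s₀} with last state L(z̃) = s of P¹_{s₀}(z̃) restricted to sequences whose observable projection is a. Then Êᵃ_{s₀,s} satisfies the fixpoint equation Êᵃ_{s₀,s} = max( δ(s₀)(a, s), max_{s' ∈ S} δ(s₀)(ε, s') · Êᵃ_{s',s} ). -/

import Mathlib

open scoped ENNReal

/-- A Hidden Markov Model with ε-transitions: a finite state space `S`, a finite
alphabet `A`, and for each state a probability function on `(Σ ∪ {ε}) × S`,
where `ε` is modelled by `none`. -/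
structure HMMeps (S A : Type*) [Fintype S] [Fintype A] where
  δ : S → Option A × S → ℝ≥0∞
  sum_one : ∀ s : S, ∑ p : Option A × S, δ s p = 1

namespace HMMeps

variable {S A : Type*} [Fintype S] [Fintype A]

/-- The probability of an alternating sequence `s₀ a₁ s₁ … a_m s_m`, represented by
its start state `s₀` together with the list of steps `[(a₁,s₁),…,(a_m,s_m)]`:
the product of the transition probabilities. -/
noncomputable def pathProb (M : HMMeps S A) : S → List (Option A × S) → ℝ≥0∞
  | _, [] => 1
  | s, p :: rest => M.δ s p * M.pathProb p.2 rest

/-- The observable projection `Y`: the sequence of observable symbols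
(ε's and states removed). -/
def obsSeq (z : List (Option A × S)) : List A := z.filterMap Prod.fst

/-- The last state `L` of a sequence starting in `s₀`. -/
def lastState (s₀ : S) (z : List (Option A × S)) : S :=
  (z.getLast?.map Prod.snd).getD s₀

/-- The sample space `Ωⁿ_{s₀} = s₀((εS)*ΣS)ⁿ`: alternating sequences containing
exactly `n` observable symbols whose second-to-last element (i.e. the symbol of the
last transition) is observable.  (The start state is kept separately, so an element
of the sample space is just the list of steps.) -/
def Omega (S A : Type*) (n : ℕ) : Set (List (Option A × S)) :=
  {z | (obsSeq z).length = n ∧ ∀ p ∈ z.getLast?, (Prod.fst p).isSome = true}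

end HMMeps

namespace HMMeps

/-- `Êᵃ_{s₀,s}`: the maximal probability of a sequence in `Ω¹_{s₀}` with observable
projection `a` and last state `s`. -/
noncomputable def Ehat {S A : Type*} [Fintype S] [Fintype A]
    (M : HMMeps S A) (a : A) (s₀ s : S) : ℝ≥0∞ :=
  ⨆ z : {z : List (Option A × S) //
      z ∈ Omega S A 1 ∧ obsSeq z = [a] ∧ lastState s₀ z = s},
    M.pathProb s₀ z.1

/-- `Êᵃ_{s₀,s}` satisfies the fixpoint equation
`Êᵃ_{s₀,s} = max( δ(s₀)(a,s) , max_{s'} δ(s₀)(ε,s')·Êᵃ_{s',s} )`. -/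
theorem Ehat_fixpoint {S A : Type*} [Fintype S] [Fintype A]
    (M : HMMeps S A) (a : A) (s₀ s : S) :
    Ehat M a s₀ s
      = max (M.δ s₀ (some a, s)) (⨆ s' : S, M.δ s₀ (none, s') * Ehat M a s' s) := by
  apply le_antisymm
  · apply iSup_le
    rintro ⟨z, ⟨hlen, hlast⟩, hobs, hL⟩
    obtain ⟨⟨oa, s₁⟩, rest, rfl⟩ : ∃ p rest, z = p :: rest := by
      cases z with
      | nil => simp [obsSeq] at hobs
      | cons p rest => exact ⟨p, rest, rfl⟩
    cases oa with
    | some a' =>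
      have hobs' : a' :: rest.filterMap Prod.fst = [a] := by
        simpa [obsSeq, List.filterMap_cons] using hobs
      injection hobs' with h1 hrest
      subst h1
      have hrnil : rest = [] := by
        cases rest with
        | nil => rfl
        | cons q rs =>
          have h1 : ((q :: rs).getLast (by simp)) ∈ q :: rs :=
            List.getLast_mem (by simp)
          have h2 := (List.filterMap_eq_nil_iff.mp hrest) _ h1
          have h3 := hlast _ (by
            show ((some a', s₁) :: q :: rs).getLast? = _
            rw [List.getLast?_cons_cons, List.getLast?_eq_getLast (l := q :: rs) (by simp)])
          simp [h2] at h3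
      subst hrnil
      have hs : s₁ = s := by simpa [lastState] using hL
      subst hs
      have : M.pathProb s₀ [(some a', s₁)] = M.δ s₀ (some a', s₁) := by
        simp [pathProb]
      rw [this]
      exact le_max_left _ _
    | none =>
      simp only [obsSeq, List.filterMap_cons] at hobs
      have hrne : rest ≠ [] := by
        rintro rfl; simp at hobs
      obtain ⟨q, rs, rfl⟩ := List.exists_cons_of_ne_nil hrne
      have hglast : ((none, s₁) :: q :: rs).getLast? = (q :: rs).getLast? :=
        List.getLast?_cons_cons
      have hub : M.pathProb s₁ (q :: rs) ≤ Ehat M a s₁ s := by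
        refine le_iSup_of_le ⟨q :: rs, ?_, ?_, ?_⟩ le_rfl
        · constructor
          · set_option linter.unnecessarySimpa false in
            simpa [obsSeq] using hobs ▸ (by simpa [obsSeq, hobs] using hlen)
          · intro p hp
            exact hlast p (by rw [hglast]; exact hp)
        · simpa [obsSeq] using hobs
        · unfold lastState at hL ⊢
          rw [hglast] at hL
          rw [List.getLast?_eq_getLast (l := q :: rs) (by simp)] at hL ⊢
          simpa using hL
      calc M.pathProb s₀ ((none, s₁) :: q :: rs)
          = M.δ s₀ (none, s₁) * M.pathProb s₁ (q :: rs) := rfl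
        _ ≤ M.δ s₀ (none, s₁) * Ehat M a s₁ s := by gcongr
        _ ≤ ⨆ s' : S, M.δ s₀ (none, s') * Ehat M a s' s :=
            le_iSup (fun t => M.δ s₀ (none, t) * Ehat M a t s) s₁
        _ ≤ _ := le_max_right _ _
  · apply max_le
    · refine le_iSup_of_le ⟨[(some a, s)], ⟨?_, ?_⟩, ?_, ?_⟩ ?_
      · simp [obsSeq]
      · intro p hp; simp at hp; subst hp; rfl
      · simp [obsSeq]
      · simp [lastState]
      · simp [pathProb]
    · apply iSup_le
      intro s'
      rw [Ehat, ENNReal.mul_iSup]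
      apply iSup_le
      rintro ⟨z, ⟨hlen, hlast⟩, hobs, hL⟩
      have hzne : z ≠ [] := by rintro rfl; simp [obsSeq] at hobs
      obtain ⟨q, rs, rfl⟩ := List.exists_cons_of_ne_nil hzne
      refine le_iSup_of_le ⟨(none, s') :: q :: rs, ⟨?_, ?_⟩, ?_, ?_⟩ ?_
      · simpa [obsSeq, List.filterMap_cons] using hlen
      · intro p hp
        exact hlast p (by rwa [List.getLast?_cons_cons] at hp)
      · simpa [obsSeq, List.filterMap_cons] using hobs
      · unfold lastState at hL ⊢
        rw [List.getLast?_cons_cons]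
        rw [List.getLast?_eq_getLast (l := q :: rs) (by simp)] at hL ⊢
        simpa using hL
      · exact le_of_eq rfl

end HMMeps
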